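/- Let n be a positive integer, a a nonzero complex number, and s_m = -a^(m+1) ∑_{k=1}^n 2^(k-1) binom(m, k-1) binom(n, k) for m ≥ 0. Then for every m ≥ 0, (1+m) a^2 s_m + 2 n a s_{m+1} - (3+m) s_{m+2} = 0. -/

import Mathlib

open Finset

lemma ch_aux (n k : ℕ) : ((n:ℂ) - (k:ℂ)) * (n.choose k : ℂ) = ((k:ℂ)+1) * (n.choose (k+1) : ℂ) := by
  rcases le_or_gt k n with h | h
  · have h0 : n.choose (k+1) * (k+1) = n.choose k * (n - k) := Nat.choose_succ_right_eq n k
    have h1 : ((n.choose (k+1) * (k+1) : ℕ) : ℂ) = ((n.choose k * (n-k) : ℕ) : ℂ) := by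
      exact_mod_cast h0
    push_cast [h] at h1
    linear_combination -h1
  · rw [Nat.choose_eq_zero_of_lt h, Nat.choose_eq_zero_of_lt (by omega)]
    simp

lemma ch2_aux (m k : ℕ) : ((m:ℂ)+1-(k:ℂ)) * ((m+1).choose k : ℂ) = ((m:ℂ)+1) * (m.choose k : ℂ) := by
  have h1 := ch_aux (m+1) k
  have h0 : (m+1) * m.choose k = (m+1).choose (k+1) * (k+1) := Nat.add_one_mul_choose_eq m k
  have h2 : ((m:ℂ)+1) * (m.choose k : ℂ) = ((m+1).choose (k+1) : ℂ) * ((k:ℂ)+1) := by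
    exact_mod_cast h0
  push_cast at h1
  linear_combination h1 - h2

theorem moments_recurrence (n : ℕ) (hn : 0 < n) (a : ℂ) (ha : a ≠ 0)
    (s : ℕ → ℂ)
    (hs : ∀ m : ℕ, s m = -a ^ (m + 1) *
      ∑ k ∈ Finset.Icc 1 n, (2 : ℂ) ^ (k - 1) * (m.choose (k - 1) : ℂ) * (n.choose k : ℂ)) :
    ∀ m : ℕ, (1 + (m : ℂ)) * a ^ 2 * s m + 2 * (n : ℂ) * a * s (m + 1)
      - (3 + (m : ℂ)) * s (m + 2) = 0 := by
  obtain ⟨p, rfl⟩ : ∃ p, n = p + 1 := ⟨n - 1, by omega⟩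
  intro m
  have key : ∀ M : ℕ, ∑ k ∈ Finset.Icc 1 (p+1), (2:ℂ)^(k-1) * (M.choose (k-1) : ℂ) * ((p+1).choose k : ℂ)
      = ∑ i ∈ Finset.range (p+1), (2:ℂ)^i * (M.choose i : ℂ) * ((p+1).choose (i+1) : ℂ) := by
    intro M
    rw [← Finset.Ico_add_one_right_eq_Icc, Finset.sum_Ico_eq_sum_range]
    simp only [Nat.succ_sub_one, Nat.add_sub_cancel]
    refine Finset.sum_congr rfl (fun i _ => ?_)
    have h1 : 1 + i = i + 1 := by omega
    rw [h1]
    simp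
  rw [hs m, hs (m+1), hs (m+2), key m, key (m+1), key (m+2)]
  set F : ℕ → ℂ := fun j => if j = 0 then (0:ℂ) else
    2^j * (((p:ℂ)+1) - (j:ℂ)) * ((p+1).choose j : ℂ) * ((m+1).choose (j-1) : ℂ) with hF
  have hF0 : F 0 = 0 := by simp [hF]
  have hFs : ∀ i : ℕ, F (i+1) = 2^(i+1) * (((p:ℂ)+1) - (i:ℂ) - 1) * ((p+1).choose (i+1) : ℂ) * ((m+1).choose i : ℂ) := by
    intro i
    simp only [hF, if_neg (Nat.succ_ne_zero i), Nat.add_sub_cancel]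
    push_cast
    ring
  have H : (1+(m:ℂ)) * (∑ i ∈ Finset.range (p+1), (2:ℂ)^i * (m.choose i : ℂ) * ((p+1).choose (i+1) : ℂ))
      + 2*((p:ℂ)+1) * (∑ i ∈ Finset.range (p+1), (2:ℂ)^i * ((m+1).choose i : ℂ) * ((p+1).choose (i+1) : ℂ))
      - (3+(m:ℂ)) * (∑ i ∈ Finset.range (p+1), (2:ℂ)^i * ((m+2).choose i : ℂ) * ((p+1).choose (i+1) : ℂ)) = 0 := by
    rw [Finset.mul_sum, Finset.mul_sum, Finset.mul_sum, ← Finset.sum_add_distrib,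
      ← Finset.sum_sub_distrib]
    have step : ∀ i ∈ Finset.range (p+1),
        (1+(m:ℂ)) * ((2:ℂ)^i * (m.choose i : ℂ) * ((p+1).choose (i+1):ℂ))
        + 2*((p:ℂ)+1) * ((2:ℂ)^i * ((m+1).choose i : ℂ) * ((p+1).choose (i+1):ℂ))
        - (3+(m:ℂ)) * ((2:ℂ)^i * ((m+2).choose i:ℂ) * ((p+1).choose (i+1):ℂ))
        = F (i+1) - F i := by
      intro i _
      cases i with
      | zero =>
        rw [hFs 0, hF0]
        simp [Nat.choose_one_right]
        push_cast
        ring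
      | succ x =>
        rw [hFs (x+1), hFs x]
        have h1 : (((m+2).choose (x+1) : ℕ) : ℂ) = ((m+1).choose x : ℂ) + ((m+1).choose (x+1) : ℂ) := by
          exact_mod_cast Nat.choose_succ_succ (m+1) x
        have h2 := ch_aux (p+1) (x+1)
        push_cast at h2
        have h3 := ch2_aux m (x+1)
        push_cast at h3
        have h7 : ((x:ℂ)+1) * ((m+1).choose (x+1) : ℂ) = ((m:ℂ)+1-(x:ℂ)) * ((m+1).choose x : ℂ) := by
          have a1 := ch2_aux m x
          have a2 : ((m:ℂ)+1) * (m.choose x : ℂ) = ((m+1).choose (x+1) : ℂ) * ((x:ℂ)+1) := by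
            exact_mod_cast Nat.add_one_mul_choose_eq m x
          linear_combination -a1 - a2
        push_cast
        linear_combination (2:ℂ)^(x+1) * ( (-(3+(m:ℂ))) * (((p+1).choose (x+2) : ℂ)) * h1
          + ((m+1).choose x : ℂ) * h2
          - (((p+1).choose (x+2) : ℂ)) * h3
          + (((p+1).choose (x+2) : ℂ)) * h7 )
    rw [Finset.sum_congr rfl step, Finset.sum_range_sub, hF0, hFs p]
    push_cast
    ring
  push_cast
  push_cast at H
  linear_combination (-(a^(m+3))) * H
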